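/- arXiv:2602.18235 — 5 statements merged into one kernel-verified Lean document; each statement's English description precedes it below -/
import Mathlib

section
/- Let V be a finite set of integers and let 𝓐 be a finite family of finite arithmetic progressions, each with difference a power of 2. Then there exist a finite set P ⊆ ℝ², a bijection f : V → P, and for each A ∈ 𝓐 an axis-parallel rectangle R_A, such that for every A ∈ 𝓐 the image f(A ∩ V) equals P ∩ R_A, and the y-projections of the rectangles {R_A : A ∈ 𝓐} form a nested family. -/
/-- The axis-parallel rectangle `[x₁,x₂] × [y₁,y₂]` encoded by the quadruple
`(x₁, x₂, y₁, y₂)`. -/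
def rectSet (r : ℝ × ℝ × ℝ × ℝ) : Set (ℝ × ℝ) :=
  Set.Icc r.1 r.2.1 ×ˢ Set.Icc r.2.2.1 r.2.2.2

/-- The `y`-projection `[y₁,y₂]` of the rectangle encoded by `(x₁, x₂, y₁, y₂)`. -/
def yProj (r : ℝ × ℝ × ℝ × ℝ) : Set ℝ := Set.Icc r.2.2.1 r.2.2.2

/-- The finite arithmetic progression `{b, b + d, …, b + (m-1)d}`. -/
def AP (b d : ℤ) (m : ℕ) : Set ℤ := {x | ∃ i : ℕ, i < m ∧ x = b + i * d}

namespace S3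

/-- Reverse the low `N` bits of a natural number. -/
def rev : ℕ → ℕ → ℕ
  | 0, _ => 0
  | (N+1), r => rev N (r / 2) + (r % 2) * 2 ^ N

lemma rev_lt (N r : ℕ) : rev N r < 2 ^ N := by
  induction N generalizing r with
  | zero => simp [rev]
  | succ N ih =>
    have h1 := ih (r / 2)
    have h2 : r % 2 ≤ 1 := by omega
    have h3 : r % 2 * 2 ^ N ≤ 1 * 2 ^ N := Nat.mul_le_mul_right _ h2
    have h4 : (2:ℕ) ^ (N+1) = 2 ^ N * 2 := pow_succ 2 N
    simp only [rev]
    omega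

lemma rev_split : ∀ t N r : ℕ, t ≤ N →
    ∃ s, s < 2 ^ (N - t) ∧ rev N r = rev t (r % 2 ^ t) * 2 ^ (N - t) + s := by
  intro t
  induction t with
  | zero => intro N r _; exact ⟨rev N r, rev_lt N r, by simp [rev]⟩
  | succ t ih =>
    intro N r ht
    obtain ⟨N', rfl⟩ : ∃ N', N = N' + 1 := ⟨N - 1, by omega⟩
    obtain ⟨s, hs, hIH⟩ := ih N' (r / 2) (by omega)
    refine ⟨s, by simpa [Nat.succ_sub_succ] using hs, ?_⟩
    have f1 : (r % 2 ^ (t+1)) / 2 = (r / 2) % 2 ^ t := by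
      rw [pow_succ' 2 t]
      exact (Nat.mod_mul_right_div_self r 2 (2^t))
    have f2 : (r % 2 ^ (t+1)) % 2 = r % 2 :=
      Nat.mod_mod_of_dvd r (dvd_pow_self 2 (Nat.succ_ne_zero t))
    have hpow : (2:ℕ) ^ t * 2 ^ (N' - t) = 2 ^ N' := by
      rw [← pow_add]; congr 1; omega
    simp only [rev, Nat.succ_sub_succ, f1, f2]
    rw [hIH, add_mul, mul_assoc, hpow]
    ring

lemma rev_inj : ∀ t a b : ℕ, a < 2 ^ t → b < 2 ^ t → rev t a = rev t b → a = b := by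
  intro t
  induction t with
  | zero => intro a b ha hb _; omega
  | succ t ih =>
    intro a b ha hb h
    have hla := rev_lt t (a / 2)
    have hlb := rev_lt t (b / 2)
    have hpow : (2:ℕ) ^ (t+1) = 2 ^ t * 2 := pow_succ 2 t
    simp only [rev] at h
    rcases Nat.mod_two_eq_zero_or_one a with h2a | h2a <;>
      rcases Nat.mod_two_eq_zero_or_one b with h2b | h2b <;>
        rw [h2a, h2b] at h <;> simp at h <;>
          [skip; omega; omega; skip] <;>
      · have := ih (a/2) (b/2) (by omega) (by omega) h
        omega

lemma key (N t : ℕ) (ht : t ≤ N) (b n : ℤ) :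
    n % 2 ^ t = b % 2 ^ t ↔
      ((rev t (b % 2 ^ t).toNat : ℤ) * 2 ^ (N - t) ≤ (rev N ((n % 2 ^ N).toNat) : ℤ) ∧
        (rev N ((n % 2 ^ N).toNat) : ℤ) ≤
          (rev t (b % 2 ^ t).toNat : ℤ) * 2 ^ (N - t) + 2 ^ (N - t) - 1) := by
  set r : ℕ := (n % 2 ^ N).toNat with hrdef
  set b' : ℕ := (b % 2 ^ t).toNat with hbdef
  have h2t : (0:ℤ) < 2 ^ t := by positivity
  have h2N : (0:ℤ) < 2 ^ N := by positivity
  have hrcast : (r : ℤ) = n % 2 ^ N := Int.toNat_of_nonneg (Int.emod_nonneg n (ne_of_gt h2N))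
  have hbcast : (b' : ℤ) = b % 2 ^ t := Int.toNat_of_nonneg (Int.emod_nonneg b (ne_of_gt h2t))
  have hmod : ((r % 2 ^ t : ℕ) : ℤ) = n % 2 ^ t := by
    push_cast
    rw [hrcast, Int.emod_emod_of_dvd n (pow_dvd_pow 2 ht)]
  have hcong : (n % 2 ^ t = b % 2 ^ t) ↔ r % 2 ^ t = b' := by
    rw [← hmod, ← hbcast]
    exact_mod_cast Iff.rfl
  obtain ⟨s, hs, hsplit⟩ := rev_split t N r ht
  have hb'lt : b' < 2 ^ t := by
    have h : (b':ℤ) < 2 ^ t := by rw [hbcast]; exact Int.emod_lt_of_pos b h2t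
    exact_mod_cast h
  have hrlt : r % 2 ^ t < 2 ^ t := Nat.mod_lt _ (by positivity)
  constructor
  · intro h
    have he : r % 2 ^ t = b' := hcong.mp h
    rw [hsplit, he]
    have hs' : (s:ℤ) ≤ 2 ^ (N-t) - 1 := by
      have : (s:ℤ) < 2 ^ (N-t) := by exact_mod_cast hs
      omega
    push_cast
    constructor <;> linarith [Int.natCast_nonneg s]
  · rintro ⟨h1, h2⟩
    have h1' : rev t b' * 2 ^ (N-t) ≤ rev N r := by exact_mod_cast h1
    have h2' : rev N r < rev t b' * 2 ^ (N-t) + 2 ^ (N-t) := by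
      have : (rev N r : ℤ) < (rev t b' : ℤ) * 2 ^ (N-t) + 2 ^ (N-t) := by
        have hp : (0:ℤ) < 2 ^ (N-t) := by positivity
        linarith
      exact_mod_cast this
    have e1 : rev t b' ≤ rev t (r % 2 ^ t) := by
      by_contra hc
      push_neg at hc
      have hstep : rev t (r % 2 ^ t) + 1 ≤ rev t b' := hc
      have : rev N r < rev t b' * 2 ^ (N-t) := by
        rw [hsplit]
        calc rev t (r % 2 ^ t) * 2 ^ (N-t) + s
            < (rev t (r % 2 ^ t) + 1) * 2 ^ (N-t) := by
              rw [add_mul, one_mul]; exact Nat.add_lt_add_left hs _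
          _ ≤ rev t b' * 2 ^ (N-t) := Nat.mul_le_mul_right _ hstep
      exact absurd h1' (not_le.mpr this)
    have e2 : rev t (r % 2 ^ t) ≤ rev t b' := by
      by_contra hc
      push_neg at hc
      have hstep : rev t b' + 1 ≤ rev t (r % 2 ^ t) := hc
      have : rev t b' * 2 ^ (N-t) + 2 ^ (N-t) ≤ rev N r := by
        rw [hsplit]
        calc rev t b' * 2 ^ (N-t) + 2 ^ (N-t)
            = (rev t b' + 1) * 2 ^ (N-t) := by rw [add_mul, one_mul]
          _ ≤ rev t (r % 2 ^ t) * 2 ^ (N-t) := Nat.mul_le_mul_right _ hstep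
          _ ≤ rev t (r % 2 ^ t) * 2 ^ (N-t) + s := Nat.le_add_right _ _
      exact absurd h2' (not_lt.mpr this)
    exact hcong.mpr (rev_inj t _ _ hrlt hb'lt (le_antisymm e2 e1))

lemma AP_mem (b : ℤ) (t m : ℕ) (hm : 1 ≤ m) (n : ℤ) :
    n ∈ AP b (2 ^ t) m ↔
      n % 2 ^ t = b % 2 ^ t ∧ b ≤ n ∧ n ≤ b + ((m:ℤ) - 1) * 2 ^ t := by
  have h2t : (0:ℤ) < 2 ^ t := by positivity
  constructor
  · rintro ⟨i, him, rfl⟩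
    refine ⟨by simp [Int.add_mul_emod_self_left], ?_, ?_⟩
    · nlinarith [Int.natCast_nonneg i]
    · have hi : (i:ℤ) ≤ (m:ℤ) - 1 := by
        have : (i:ℤ) < (m:ℤ) := by exact_mod_cast him
        omega
      nlinarith
  · rintro ⟨hcong, h1, h2⟩
    have hd : (2:ℤ) ^ t ∣ n - b := Int.ModEq.dvd (hcong.symm : Int.ModEq (2^t) b n)
    obtain ⟨j, hj⟩ := hd
    have hj0 : 0 ≤ j := by nlinarith
    have hjm : j ≤ (m:ℤ) - 1 := by nlinarith
    refine ⟨j.toNat, ?_, ?_⟩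
    · have : (j.toNat : ℤ) = j := Int.toNat_of_nonneg hj0
      omega
    · have hjj : (j.toNat : ℤ) = j := Int.toNat_of_nonneg hj0
      rw [hjj]
      linarith [hj]

lemma dyadic (k k' : ℕ) (c c' : ℤ) (hk : k ≤ k')
    (h1 : c' * 2 ^ k' ≤ c * 2 ^ k + 2 ^ k - 1)
    (h2 : c * 2 ^ k ≤ c' * 2 ^ k' + 2 ^ k' - 1) :
    c' * 2 ^ k' ≤ c * 2 ^ k ∧ c * 2 ^ k + 2 ^ k - 1 ≤ c' * 2 ^ k' + 2 ^ k' - 1 := by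
  have hA : (0:ℤ) < 2 ^ k := by positivity
  have hB : (0:ℤ) < 2 ^ (k' - k) := by positivity
  have hsplit : (2:ℤ) ^ k' = 2 ^ k * 2 ^ (k' - k) := by rw [← pow_add]; congr 1; omega
  have e1 : c' * 2 ^ (k' - k) ≤ c := by
    have h : c' * 2 ^ (k' - k) * 2 ^ k < (c + 1) * 2 ^ k := by
      rw [hsplit] at h1; nlinarith
    have := lt_of_mul_lt_mul_right h (le_of_lt hA)
    omega
  have e2 : c + 1 ≤ (c' + 1) * 2 ^ (k' - k) := by
    have h : c * 2 ^ k < ((c' + 1) * 2 ^ (k' - k)) * 2 ^ k := by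
      rw [hsplit] at h2; nlinarith
    have := lt_of_mul_lt_mul_right h (le_of_lt hA)
    omega
  constructor
  · calc c' * 2 ^ k' = (c' * 2 ^ (k' - k)) * 2 ^ k := by rw [hsplit]; ring
      _ ≤ c * 2 ^ k := mul_le_mul_of_nonneg_right e1 (le_of_lt hA)
  · have : (c + 1) * 2 ^ k ≤ ((c' + 1) * 2 ^ (k' - k)) * 2 ^ k :=
      mul_le_mul_of_nonneg_right e2 (le_of_lt hA)
    have h3 : ((c' + 1) * 2 ^ (k' - k)) * 2 ^ k = c' * 2 ^ k' + 2 ^ k' := by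
      rw [hsplit]; ring
    nlinarith


end S3

open S3 in
/-- Any finite set `V ⊆ ℤ` together with a finite family `𝓐` of finite arithmetic
progressions, each with difference a power of 2, can be realized by a finite planar point
set `P` and axis-parallel rectangles whose `y`-projections are nested: there are a
bijection `f : V → P` and a rectangle `R a` for each `a ∈ 𝓐` with
`f '' (A ∩ V) = P ∩ R a`.  A progression is encoded as `(b, d, m) : ℤ × ℤ × ℕ`. -/
theorem statement3 (V : Finset ℤ) (𝓐 : Finset (ℤ × ℤ × ℕ))
    (h𝓐 : ∀ a ∈ 𝓐, (∃ t : ℕ, a.2.1 = 2 ^ t) ∧ 1 ≤ a.2.2) :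
    ∃ (P : Finset (ℝ × ℝ)) (f : ℤ → ℝ × ℝ) (R : ℤ × ℤ × ℕ → ℝ × ℝ × ℝ × ℝ),
      Set.BijOn f (V : Set ℤ) (P : Set (ℝ × ℝ)) ∧
      (∀ a ∈ 𝓐, (R a).1 ≤ (R a).2.1 ∧ (R a).2.2.1 ≤ (R a).2.2.2) ∧
      (∀ a ∈ 𝓐, f '' (AP a.1 a.2.1 a.2.2 ∩ (V : Set ℤ)) =
        (P : Set (ℝ × ℝ)) ∩ rectSet (R a)) ∧
      ∀ a ∈ 𝓐, ∀ a' ∈ 𝓐,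
        yProj (R a) ⊆ yProj (R a') ∨ yProj (R a') ⊆ yProj (R a) ∨
        yProj (R a) ∩ yProj (R a') = ∅ := by
  classical
  set T : ℤ × ℤ × ℕ → ℕ := fun a => if h : ∃ t : ℕ, a.2.1 = 2 ^ t then h.choose else 0 with hT
  have hTspec : ∀ a ∈ 𝓐, a.2.1 = 2 ^ T a := by
    intro a ha
    have h := (h𝓐 a ha).1
    simp only [hT, dif_pos h]
    exact h.choose_spec
  set N := 𝓐.sup T with hN
  have hTN : ∀ a ∈ 𝓐, T a ≤ N := fun a ha => Finset.le_sup ha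
  set g : ℤ → ℕ := fun n => rev N ((n % 2 ^ N).toNat) with hg
  set f : ℤ → ℝ × ℝ := fun n => ((n : ℝ), (g n : ℝ)) with hf
  set lo : ℤ × ℤ × ℕ → ℤ :=
    fun a => (rev (T a) ((a.1 % 2 ^ T a).toNat) : ℤ) * 2 ^ (N - T a) with hlo
  refine ⟨V.image f, f,
    fun a => ((a.1 : ℝ), ((a.1 + ((a.2.2 : ℤ) - 1) * a.2.1 : ℤ) : ℝ),
      ((lo a : ℤ) : ℝ), ((lo a + 2 ^ (N - T a) - 1 : ℤ) : ℝ)), ?_, ?_, ?_, ?_⟩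
  · -- bijectivity
    rw [Finset.coe_image]
    refine Set.InjOn.bijOn_image ?_
    intro x _ y _ hxy
    have hx : (x : ℝ) = (y : ℝ) := congrArg Prod.fst hxy
    exact_mod_cast hx
  · -- rectangle validity
    intro a ha
    have hd := hTspec a ha
    have hm1 : (1:ℤ) ≤ (a.2.2 : ℤ) := by exact_mod_cast (h𝓐 a ha).2
    constructor
    · have h0 : (0:ℤ) ≤ ((a.2.2 : ℤ) - 1) * a.2.1 := by
        rw [hd]
        exact mul_nonneg (by linarith) (by positivity)
      exact Int.cast_le.mpr (by linarith)
    · have h2p : (0:ℤ) < 2 ^ (N - T a) := by positivity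
      exact Int.cast_le.mpr (by linarith)
  · -- set equality
    intro a ha
    have hd := hTspec a ha
    have hm1 : 1 ≤ a.2.2 := (h𝓐 a ha).2
    have htN : T a ≤ N := hTN a ha
    ext p
    simp only [hf, hg, hlo, Set.mem_image, Set.mem_inter_iff, Finset.coe_image, rectSet,
      Set.prodMk_mem_set_prod_eq, Set.mem_Icc, Set.mem_setOf_eq]
    constructor
    · rintro ⟨n, ⟨hAP, hnV⟩, rfl⟩
      rw [hd] at hAP
      obtain ⟨hc, hl, hr⟩ := (AP_mem a.1 (T a) a.2.2 hm1 n).mp hAP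
      obtain ⟨hy1, hy2⟩ := (key N (T a) htN a.1 n).mp hc
      refine ⟨⟨n, hnV, rfl⟩, ⟨Int.cast_le.mpr hl, ?_⟩, Int.cast_le.mpr hy1, Int.cast_le.mpr hy2⟩
      rw [hd]
      exact Int.cast_le.mpr hr
    · rintro ⟨⟨n, hnV, rfl⟩, ⟨hx1, hx2⟩, hy1, hy2⟩
      rw [hd] at hx2
      have hl : a.1 ≤ n := Int.cast_le.mp hx1
      have hr : n ≤ a.1 + ((a.2.2 : ℤ) - 1) * 2 ^ T a := by
        have := Int.cast_le.mp hx2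
        exact this
      have hY1 : (rev (T a) ((a.1 % 2 ^ T a).toNat) : ℤ) * 2 ^ (N - T a) ≤
          (rev N ((n % 2 ^ N).toNat) : ℤ) := Int.cast_le.mp hy1
      have hY2 : (rev N ((n % 2 ^ N).toNat) : ℤ) ≤
          (rev (T a) ((a.1 % 2 ^ T a).toNat) : ℤ) * 2 ^ (N - T a) + 2 ^ (N - T a) - 1 :=
        Int.cast_le.mp hy2
      have hc := (key N (T a) htN a.1 n).mpr ⟨hY1, hY2⟩
      refine ⟨n, ⟨?_, hnV⟩, rfl⟩
      rw [hd]
      exact (AP_mem a.1 (T a) a.2.2 hm1 n).mpr ⟨hc, hl, hr⟩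
  · -- nestedness
    intro a ha a' ha'
    have htN : T a ≤ N := hTN a ha
    have htN' : T a' ≤ N := hTN a' ha'
    simp only [yProj, hlo]
    by_cases h1 : (rev (T a') ((a'.1 % 2 ^ T a').toNat) : ℤ) * 2 ^ (N - T a') ≤
        (rev (T a) ((a.1 % 2 ^ T a).toNat) : ℤ) * 2 ^ (N - T a) + 2 ^ (N - T a) - 1
    · by_cases h2 : (rev (T a) ((a.1 % 2 ^ T a).toNat) : ℤ) * 2 ^ (N - T a) ≤
          (rev (T a') ((a'.1 % 2 ^ T a').toNat) : ℤ) * 2 ^ (N - T a') + 2 ^ (N - T a') - 1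
      · rcases le_total (T a') (T a) with hle | hle
        · left
          obtain ⟨e1, e2⟩ := dyadic (N - T a) (N - T a')
            (rev (T a) ((a.1 % 2 ^ T a).toNat) : ℤ)
            (rev (T a') ((a'.1 % 2 ^ T a').toNat) : ℤ) (by omega) h1 h2
          exact Set.Icc_subset_Icc (Int.cast_le.mpr e1) (Int.cast_le.mpr e2)
        · right; left
          obtain ⟨e1, e2⟩ := dyadic (N - T a') (N - T a)
            (rev (T a') ((a'.1 % 2 ^ T a').toNat) : ℤ)
            (rev (T a) ((a.1 % 2 ^ T a).toNat) : ℤ) (by omega) h2 h1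
          exact Set.Icc_subset_Icc (Int.cast_le.mpr e1) (Int.cast_le.mpr e2)
      · right; right
        push_neg at h2
        rw [Set.eq_empty_iff_forall_notMem]
        rintro x ⟨⟨hxa, _⟩, _, hxb⟩
        have hcast : (((rev (T a') ((a'.1 % 2 ^ T a').toNat) : ℤ) * 2 ^ (N - T a')
            + 2 ^ (N - T a') - 1 : ℤ) : ℝ) <
            (((rev (T a) ((a.1 % 2 ^ T a).toNat) : ℤ) * 2 ^ (N - T a) : ℤ) : ℝ) :=
          Int.cast_lt.mpr h2
        linarith
    · right; right
      push_neg at h1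
      rw [Set.eq_empty_iff_forall_notMem]
      rintro x ⟨⟨_, hxa⟩, hxb, _⟩
      have hcast : (((rev (T a) ((a.1 % 2 ^ T a).toNat) : ℤ) * 2 ^ (N - T a)
          + 2 ^ (N - T a) - 1 : ℤ) : ℝ) <
          (((rev (T a') ((a'.1 % 2 ^ T a').toNat) : ℤ) * 2 ^ (N - T a') : ℤ) : ℝ) :=
        Int.cast_lt.mpr h1
      linarith
end

section
/- Let P be a finite set of points in ℝ² with pairwise distinct x-coordinates and let 𝓡 be a finite family of axis-parallel rectangles whose y-projections form a nested family. Then there exist a finite set V of integers, a bijection g : P → V, and for each R ∈ 𝓡 a finite arithmetic progression A_R whose difference is a power of 2, such that for every R ∈ 𝓡 the image g(P ∩ R) equals A_R ∩ V. -/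
/-- Any finite planar point set `P` with pairwise distinct `x`-coordinates, together with
a finite family `𝓡` of axis-parallel rectangles whose `y`-projections form a nested
family, can be realized by a finite set `V ⊆ ℤ` and finite arithmetic progressions whose
differences are powers of 2: there are a bijection `g : P → V` and for each `r ∈ 𝓡`
a progression (with base `(A r).1`, difference `2 ^ (A r).2.1` and length `(A r).2.2`)
such that `g '' (P ∩ r) = A_r ∩ V`. -/
theorem statement4 (P : Finset (ℝ × ℝ))
    (hP : ∀ p ∈ P, ∀ q ∈ P, p.1 = q.1 → p = q)
    (𝓡 : Finset (ℝ × ℝ × ℝ × ℝ))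
    (hord : ∀ r ∈ 𝓡, r.1 ≤ r.2.1 ∧ r.2.2.1 ≤ r.2.2.2)
    (hnest : ∀ r ∈ 𝓡, ∀ r' ∈ 𝓡,
      yProj r ⊆ yProj r' ∨ yProj r' ⊆ yProj r ∨ yProj r ∩ yProj r' = ∅) :
    ∃ (V : Finset ℤ) (g : ℝ × ℝ → ℤ) (A : ℝ × ℝ × ℝ × ℝ → ℤ × ℕ × ℕ),
      Set.BijOn g (P : Set (ℝ × ℝ)) (V : Set ℤ) ∧
      (∀ r ∈ 𝓡, 1 ≤ (A r).2.2) ∧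
      ∀ r ∈ 𝓡, g '' ((P : Set (ℝ × ℝ)) ∩ rectSet r) =
        AP (A r).1 (2 ^ (A r).2.1) (A r).2.2 ∩ (V : Set ℤ) := by
  classical
  set key : ℝ × ℝ × ℝ × ℝ → ℕ := fun r => (P.filter (fun p => p.2 ∈ yProj r)).card with hkeydef
  set L : List (ℝ × ℝ × ℝ × ℝ) :=
    𝓡.toList.mergeSort (fun a b => decide (key b ≤ key a)) with hLdef
  have hperm : L.Perm 𝓡.toList := List.mergeSort_perm _ _
  have hmemL : ∀ r ∈ 𝓡, r ∈ L := fun r hr => hperm.mem_iff.mpr (Finset.mem_toList.mpr hr)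
  have hsorted : L.Pairwise (fun a b => decide (key b ≤ key a) = true) := by
    apply List.pairwise_mergeSort
    · intro a b c h1 h2
      simp only [decide_eq_true_eq] at *
      exact le_trans h2 h1
    · intro a b
      simpa using Nat.le_total (key b) (key a)
  set t : ℕ := L.length with htdef
  set idx : ℝ × ℝ × ℝ × ℝ → ℕ :=
    fun r => if h : r ∈ L then (List.mem_iff_getElem.mp h).choose else 0 with hidxdef
  have hidx_spec : ∀ r ∈ 𝓡, ∃ h : idx r < t, L[idx r]'h = r := by
    intro r hr
    have h := hmemL r hr
    simp only [hidxdef, dif_pos h, htdef]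
    obtain ⟨hlt, heq⟩ := (List.mem_iff_getElem.mp h).choose_spec
    exact ⟨hlt, heq⟩
  have hidx_lt : ∀ r ∈ 𝓡, idx r < t := fun r hr => (hidx_spec r hr).1
  have hidx_inj : ∀ r ∈ 𝓡, ∀ r' ∈ 𝓡, idx r = idx r' → r = r' := by
    intro r hr r' hr' h
    obtain ⟨h1, e1⟩ := hidx_spec r hr
    obtain ⟨h2, e2⟩ := hidx_spec r' hr'
    rw [← e1, ← e2]
    congr 1
  have hkey_mono : ∀ r ∈ 𝓡, ∀ r' ∈ 𝓡, idx r' < idx r → key r ≤ key r' := by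
    intro r hr r' hr' hlt
    obtain ⟨h1, e1⟩ := hidx_spec r hr
    obtain ⟨h2, e2⟩ := hidx_spec r' hr'
    have := (List.pairwise_iff_getElem.mp hsorted) (idx r') (idx r)
      (by rw [← htdef]; exact h2) (by rw [← htdef]; exact h1) hlt
    rw [show L[idx r]'(by rw [← htdef]; exact h1) = r from e1,
        show L[idx r']'(by rw [← htdef]; exact h2) = r' from e2] at this
    simpa using this
  -- bit constancy
  have hbit : ∀ r ∈ 𝓡, ∀ r' ∈ 𝓡, idx r' < idx r → ∀ p ∈ P, p.2 ∈ yProj r →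
      ∀ q ∈ P, q.2 ∈ yProj r → (p.2 ∈ yProj r' ↔ q.2 ∈ yProj r') := by
    intro r hr r' hr' hlt p hp hpy q hq hqy
    rcases hnest r hr r' hr' with h | h | h
    · exact iff_of_true (h hpy) (h hqy)
    · have hsub : P.filter (fun u => u.2 ∈ yProj r') ⊆ P.filter (fun u => u.2 ∈ yProj r) := by
        intro x hx
        rw [Finset.mem_filter] at hx ⊢
        exact ⟨hx.1, h hx.2⟩
      have hk1 : key r ≤ key r' := hkey_mono r hr r' hr' hlt
      simp only [hkeydef] at hk1
      have heq : P.filter (fun u => u.2 ∈ yProj r') = P.filter (fun u => u.2 ∈ yProj r) :=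
        Finset.eq_of_subset_of_card_le hsub hk1
      have hpmem : p ∈ P.filter (fun u => u.2 ∈ yProj r) := Finset.mem_filter.mpr ⟨hp, hpy⟩
      have hqmem : q ∈ P.filter (fun u => u.2 ∈ yProj r) := Finset.mem_filter.mpr ⟨hq, hqy⟩
      rw [← heq] at hpmem hqmem
      exact iff_of_true (Finset.mem_filter.mp hpmem).2 (Finset.mem_filter.mp hqmem).2
    · refine iff_of_false (fun hm => ?_) (fun hm => ?_)
      · exact Set.eq_empty_iff_forall_notMem.mp h p.2 ⟨hpy, hm⟩
      · exact Set.eq_empty_iff_forall_notMem.mp h q.2 ⟨hqy, hm⟩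
  -- the binary encoding
  set c : ℝ × ℝ → ℕ :=
    fun p => ∑ r' ∈ 𝓡.filter (fun r' => p.2 ∈ yProj r'), 2 ^ idx r' with hcdef
  have hc_lt : ∀ p : ℝ × ℝ, c p < 2 ^ t := by
    intro p
    simp only [hcdef]
    have hinj : Set.InjOn idx (𝓡.filter (fun r' => p.2 ∈ yProj r')) := by
      intro a ha b hb hab
      exact hidx_inj a (Finset.mem_of_mem_filter a ha) b (Finset.mem_of_mem_filter b hb) hab
    rw [← Finset.sum_image (fun a ha b hb hab => hinj ha hb hab)]
    exact Nat.geomSum_lt le_rfl (by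
      intro j hj
      obtain ⟨r', hr', rfl⟩ := Finset.mem_image.mp hj
      exact hidx_lt r' (Finset.mem_of_mem_filter r' hr'))
  -- the map g
  set rnk : ℝ × ℝ → ℕ := fun p => (P.filter (fun q => q.1 < p.1)).card with hrnkdef
  set nv : ℝ × ℝ → ℕ := fun p => rnk p * 2 ^ t + c p with hnvdef
  set g : ℝ × ℝ → ℤ := fun p => (nv p : ℤ) with hgdef
  set V : Finset ℤ := P.image g with hVdef
  have hmono : ∀ p ∈ P, ∀ q ∈ P, p.1 < q.1 → nv p < nv q := by
    intro p hp q hq hpq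
    have h1 : rnk p < rnk q := by
      simp only [hrnkdef]
      apply Finset.card_lt_card
      rw [Finset.ssubset_iff_of_subset]
      · exact ⟨p, Finset.mem_filter.mpr ⟨hp, hpq⟩, fun hc => lt_irrefl _ (Finset.mem_filter.mp hc).2⟩
      · intro u hu
        rw [Finset.mem_filter] at hu ⊢
        exact ⟨hu.1, lt_trans hu.2 hpq⟩
    simp only [hnvdef]
    calc rnk p * 2 ^ t + c p < rnk p * 2 ^ t + 2 ^ t := by
          exact Nat.add_lt_add_left (hc_lt p) _
      _ = (rnk p + 1) * 2 ^ t := by ring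
      _ ≤ rnk q * 2 ^ t := Nat.mul_le_mul_right _ h1
      _ ≤ rnk q * 2 ^ t + c q := Nat.le_add_right _ _
  have hgmono : ∀ p ∈ P, ∀ q ∈ P, p.1 < q.1 → g p < g q := by
    intro p hp q hq h
    simp only [hgdef]
    exact_mod_cast hmono p hp q hq h
  have hginj : Set.InjOn g (P : Set (ℝ × ℝ)) := by
    intro p hp q hq h
    by_contra hne
    have hx : p.1 ≠ q.1 := fun he => hne (hP p hp q hq he)
    rcases lt_or_gt_of_ne hx with hlt | hlt
    · exact absurd h (ne_of_lt (hgmono p hp q hq hlt))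
    · exact absurd h.symm (ne_of_lt (hgmono q hq p hp hlt))
  -- integer expression for c
  have hcast : ∀ p : ℝ × ℝ, (c p : ℤ) = ∑ r' ∈ 𝓡, if p.2 ∈ yProj r' then (2 : ℤ) ^ idx r' else 0 := by
    intro p
    simp only [hcdef]
    push_cast
    rw [Finset.sum_filter]
  -- congruence (A): both points inside
  have hdvd_c : ∀ r ∈ 𝓡, ∀ p ∈ P, p.2 ∈ yProj r → ∀ q ∈ P, q.2 ∈ yProj r →
      (2 : ℤ) ^ (idx r + 1) ∣ (c p : ℤ) - (c q : ℤ) := by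
    intro r hr p hp hpy q hq hqy
    rw [hcast p, hcast q, ← Finset.sum_sub_distrib]
    apply Finset.dvd_sum
    intro r' hr'
    rcases lt_trichotomy (idx r') (idx r) with hlt | heq | hgt
    · rw [if_congr (hbit r hr r' hr' hlt p hp hpy q hq hqy) rfl rfl, sub_self]
      exact dvd_zero _
    · rw [hidx_inj r' hr' r hr heq, if_pos hpy, if_pos hqy, sub_self]
      exact dvd_zero _
    · apply dvd_sub
      · split
        · exact pow_dvd_pow 2 hgt
        · exact dvd_zero _
      · split
        · exact pow_dvd_pow 2 hgt
        · exact dvd_zero _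
  -- truncated encoding
  set clow : ℝ × ℝ → ℕ → ℕ :=
    fun p k => ∑ r' ∈ 𝓡.filter (fun r' => p.2 ∈ yProj r' ∧ idx r' ≤ k), 2 ^ idx r' with hclowdef
  have hclow_img : ∀ (p : ℝ × ℝ) (k : ℕ), clow p k =
      ∑ j ∈ (𝓡.filter (fun r' => p.2 ∈ yProj r' ∧ idx r' ≤ k)).image idx, 2 ^ j := by
    intro p k
    simp only [hclowdef]
    rw [Finset.sum_image (fun a ha b hb hab =>
      hidx_inj a (Finset.mem_of_mem_filter a ha) b (Finset.mem_of_mem_filter b hb) hab)]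
  have hclow_lt : ∀ (p : ℝ × ℝ) (k : ℕ), clow p k < 2 ^ (k + 1) := by
    intro p k
    rw [hclow_img]
    apply Nat.geomSum_lt le_rfl
    intro j hj
    obtain ⟨r', hr', rfl⟩ := Finset.mem_image.mp hj
    have := (Finset.mem_filter.mp hr').2.2
    omega
  have hclow_cast : ∀ (p : ℝ × ℝ) (k : ℕ), (clow p k : ℤ) =
      ∑ r' ∈ 𝓡, if p.2 ∈ yProj r' ∧ idx r' ≤ k then (2 : ℤ) ^ idx r' else 0 := by
    intro p k
    simp only [hclowdef]
    push_cast
    rw [Finset.sum_filter]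
  have hclow_cong : ∀ (p : ℝ × ℝ) (k : ℕ), (2 : ℤ) ^ (k + 1) ∣ (c p : ℤ) - clow p k := by
    intro p k
    rw [hcast p, hclow_cast p k, ← Finset.sum_sub_distrib]
    apply Finset.dvd_sum
    intro r' hr'
    by_cases h1 : p.2 ∈ yProj r'
    · by_cases h2 : idx r' ≤ k
      · rw [if_pos h1, if_pos ⟨h1, h2⟩, sub_self]; exact dvd_zero _
      · rw [if_pos h1, if_neg (fun hc => h2 hc.2), sub_zero]
        exact pow_dvd_pow 2 (by omega)
    · rw [if_neg h1, if_neg (fun hc => h1 hc.1), sub_self]; exact dvd_zero _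
  -- bit extraction (B)
  have hbitext : ∀ r ∈ 𝓡, ∀ p ∈ P, ∀ q ∈ P, q.2 ∈ yProj r →
      (2 : ℤ) ^ (idx r + 1) ∣ (c p : ℤ) - (c q : ℤ) → p.2 ∈ yProj r := by
    intro r hr p hp q hq hqy hdvd
    have h1 := hclow_cong p (idx r)
    have h2 := hclow_cong q (idx r)
    have hd : (2 : ℤ) ^ (idx r + 1) ∣ (clow p (idx r) : ℤ) - clow q (idx r) := by
      have h := dvd_sub (dvd_add hdvd h2) h1
      rwa [show ((c p : ℤ) - c q) + ((c q : ℤ) - clow q (idx r)) - ((c p : ℤ) - clow p (idx r))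
        = (clow p (idx r) : ℤ) - clow q (idx r) from by ring] at h
    have habs : |(clow p (idx r) : ℤ) - clow q (idx r)| < 2 ^ (idx r + 1) := by
      rw [abs_sub_lt_iff]
      constructor
      · have hlt : (clow p (idx r) : ℤ) < 2 ^ (idx r + 1) := by exact_mod_cast hclow_lt p (idx r)
        have h0 : (0 : ℤ) ≤ clow q (idx r) := Int.ofNat_nonneg _
        linarith
      · have hlt : (clow q (idx r) : ℤ) < 2 ^ (idx r + 1) := by exact_mod_cast hclow_lt q (idx r)
        have h0 : (0 : ℤ) ≤ clow p (idx r) := Int.ofNat_nonneg _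
        linarith
    have h0 : clow p (idx r) = clow q (idx r) := by
      have := Int.eq_zero_of_abs_lt_dvd hd habs
      omega
    have himg : (𝓡.filter (fun r' => p.2 ∈ yProj r' ∧ idx r' ≤ idx r)).image idx =
        (𝓡.filter (fun r' => q.2 ∈ yProj r' ∧ idx r' ≤ idx r)).image idx := by
      apply Finset.geomSum_injective (n := 2) le_rfl
      simp only
      rw [← hclow_img, ← hclow_img, h0]
    have hkq : idx r ∈ (𝓡.filter (fun r' => q.2 ∈ yProj r' ∧ idx r' ≤ idx r)).image idx :=
      Finset.mem_image.mpr ⟨r, Finset.mem_filter.mpr ⟨hr, hqy, le_rfl⟩, rfl⟩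
    rw [← himg] at hkq
    obtain ⟨r', hr'mem, hr'k⟩ := Finset.mem_image.mp hkq
    obtain ⟨hr'R, hy, _⟩ := Finset.mem_filter.mp hr'mem
    rw [hidx_inj r' hr'R r hr hr'k] at hy
    exact hy
  -- divisibility at the level of g
  have hdvd_g : ∀ r ∈ 𝓡, ∀ p ∈ P, p.2 ∈ yProj r → ∀ q ∈ P, q.2 ∈ yProj r →
      (2 : ℤ) ^ (idx r + 1) ∣ g p - g q := by
    intro r hr p hp hpy q hq hqy
    have hsplit : g p - g q = ((rnk p : ℤ) - rnk q) * 2 ^ t + ((c p : ℤ) - c q) := by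
      simp only [hgdef, hnvdef]
      push_cast
      ring
    rw [hsplit]
    refine dvd_add (Dvd.dvd.mul_left ?_ _) (hdvd_c r hr p hp hpy q hq hqy)
    exact pow_dvd_pow 2 (hidx_lt r hr)
  have h2t : ∀ r ∈ 𝓡, (2 : ℤ) ^ (idx r + 1) ∣ (2 : ℤ) ^ t :=
    fun r hr => pow_dvd_pow 2 (hidx_lt r hr)
  have hdvd_gc : ∀ r ∈ 𝓡, ∀ p q : ℝ × ℝ,
      (2 : ℤ) ^ (idx r + 1) ∣ g p - g q → (2 : ℤ) ^ (idx r + 1) ∣ (c p : ℤ) - c q := by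
    intro r hr p q h
    have hh := dvd_sub h (Dvd.dvd.mul_left (h2t r hr) ((rnk p : ℤ) - rnk q))
    rwa [show g p - g q - ((rnk p : ℤ) - rnk q) * 2 ^ t = (c p : ℤ) - c q from by
      simp only [hgdef, hnvdef]; push_cast; ring] at hh
  -- the progressions
  refine ⟨V, g, fun r =>
    if h : (P.filter (fun p => p ∈ rectSet r)).Nonempty then
      (((P.filter (fun p => p ∈ rectSet r)).image g).min' (h.image g), idx r + 1,
        ((((P.filter (fun p => p ∈ rectSet r)).image g).max' (h.image g) -
          ((P.filter (fun p => p ∈ rectSet r)).image g).min' (h.image g)) /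
            2 ^ (idx r + 1)).toNat + 1)
    else (-1, 0, 1), ?_, ?_, ?_⟩
  · -- bijection
    refine ⟨fun p hp => ?_, hginj, fun z hz => ?_⟩
    · rw [hVdef]
      exact Finset.mem_coe.mpr (Finset.mem_image_of_mem g hp)
    · rw [hVdef] at hz
      rw [Finset.coe_image] at hz
      exact hz
  · -- lengths are positive
    intro r hr
    by_cases h : (P.filter (fun p => p ∈ rectSet r)).Nonempty
    · simp only [dif_pos h]
      omega
    · simp only [dif_neg h]
      omega
  · -- the main property
    intro r hr
    by_cases hne : (P.filter (fun p => p ∈ rectSet r)).Nonempty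
    · simp only [dif_pos hne]
      set W : Finset ℤ := (P.filter (fun p => p ∈ rectSet r)).image g with hWdef
      have hWne : W.Nonempty := hne.image g
      set b : ℤ := W.min' hWne with hbdef
      set M : ℤ := W.max' hWne with hMdef
      set d : ℤ := (2 : ℤ) ^ (idx r + 1) with hddef
      have hd0 : (0 : ℤ) < d := by positivity
      obtain ⟨pmin, hpminf, hgpmin⟩ := Finset.mem_image.mp (W.min'_mem hWne)
      obtain ⟨pmax, hpmaxf, hgpmax⟩ := Finset.mem_image.mp (W.max'_mem hWne)
      obtain ⟨hpminP, hpminrect⟩ := Finset.mem_filter.mp hpminf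
      obtain ⟨hpmaxP, hpmaxrect⟩ := Finset.mem_filter.mp hpmaxf
      have hpminy : pmin.2 ∈ yProj r := (Set.mem_prod.mp hpminrect).2
      have hpmaxy : pmax.2 ∈ yProj r := (Set.mem_prod.mp hpmaxrect).2
      have hpminx : pmin.1 ∈ Set.Icc r.1 r.2.1 := (Set.mem_prod.mp hpminrect).1
      have hpmaxx : pmax.1 ∈ Set.Icc r.1 r.2.1 := (Set.mem_prod.mp hpmaxrect).1
      have hbM : b ≤ M := W.min'_le M (W.max'_mem hWne)
      have hdM : d ∣ M - b := by
        rw [hddef, hMdef, hbdef, ← hgpmin, ← hgpmax]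
        exact hdvd_g r hr pmax hpmaxP hpmaxy pmin hpminP hpminy
      ext z
      simp only [Set.mem_inter_iff, Set.mem_image, AP, Set.mem_setOf_eq]
      constructor
      · rintro ⟨p, ⟨hpP, hprect⟩, rfl⟩
        have hpP' : p ∈ P := hpP
        have hpf : p ∈ P.filter (fun p => p ∈ rectSet r) :=
          Finset.mem_filter.mpr ⟨hpP', hprect⟩
        have hpW : g p ∈ W := by rw [hWdef]; exact Finset.mem_image_of_mem g hpf
        have hbp : b ≤ g p := W.min'_le _ hpW
        have hpM : g p ≤ M := W.le_max' _ hpW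
        have hpy : p.2 ∈ yProj r := (Set.mem_prod.mp hprect).2
        have hdp : d ∣ g p - b := by
          rw [hddef, hbdef, ← hgpmin]
          exact hdvd_g r hr p hpP' hpy pmin hpminP hpminy
        have hq0 : (0 : ℤ) ≤ (g p - b) / d := Int.ediv_nonneg (by linarith) hd0.le
        refine ⟨⟨((g p - b) / d).toNat, ?_, ?_⟩, ?_⟩
        · have hle : (g p - b) / d ≤ (M - b) / d :=
            Int.ediv_le_ediv hd0 (by linarith)
          have := Int.toNat_le_toNat hle
          omega
        · rw [Int.toNat_of_nonneg hq0, Int.ediv_mul_cancel hdp]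
          ring
        · exact Finset.mem_coe.mpr (by rw [hVdef]; exact Finset.mem_image_of_mem g hpP')
      · rintro ⟨⟨i, him, hz⟩, hzV⟩
        rw [hVdef] at hzV
        obtain ⟨q, hqP, hgq⟩ := Finset.mem_image.mp (Finset.mem_coe.mp hzV)
        have hdq : d ∣ g q - b := by
          rw [hgq, hz]
          exact ⟨i, by ring⟩
        have hqy : q.2 ∈ yProj r := by
          refine hbitext r hr q hqP pmin hpminP hpminy ?_
          refine hdvd_gc r hr q pmin ?_
          rw [hgpmin, ← hbdef, ← hddef]
          exact hdq
        have hbz : b ≤ z := by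
          rw [hz]
          have : (0 : ℤ) ≤ (i : ℤ) * d := mul_nonneg (Int.ofNat_nonneg i) hd0.le
          linarith
        have hzM : z ≤ M := by
          have him' : (i : ℤ) ≤ ((M - b) / d).toNat := by
            have : i ≤ ((M - b) / d).toNat := by omega
            exact_mod_cast this
          have htn : (((M - b) / d).toNat : ℤ) = (M - b) / d :=
            Int.toNat_of_nonneg (Int.ediv_nonneg (by linarith) hd0.le)
          have hmul : (i : ℤ) * d ≤ ((M - b) / d) * d := by
            rw [← htn]
            exact mul_le_mul_of_nonneg_right him' hd0.le
          rw [Int.ediv_mul_cancel hdM] at hmul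
          rw [hz]
          linarith
        have hq1min : pmin.1 ≤ q.1 := by
          by_contra hcon
          push_neg at hcon
          have := hgmono q hqP pmin hpminP hcon
          rw [hgpmin, hgq] at this
          linarith
        have hq1max : q.1 ≤ pmax.1 := by
          by_contra hcon
          push_neg at hcon
          have := hgmono pmax hpmaxP q hqP hcon
          rw [hgpmax, hgq] at this
          linarith
        refine ⟨q, ⟨hqP, ?_⟩, hgq⟩
        refine Set.mem_prod.mpr ⟨Set.mem_Icc.mpr ⟨?_, ?_⟩, hqy⟩
        · exact le_trans (Set.mem_Icc.mp hpminx).1 hq1min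
        · exact le_trans hq1max (Set.mem_Icc.mp hpmaxx).2
    · simp only [dif_neg hne]
      have hempty : (P : Set (ℝ × ℝ)) ∩ rectSet r = ∅ := by
        rw [Set.eq_empty_iff_forall_notMem]
        rintro p ⟨hp, hrect⟩
        exact hne ⟨p, Finset.mem_filter.mpr ⟨hp, hrect⟩⟩
      rw [hempty, Set.image_empty]
      symm
      rw [Set.eq_empty_iff_forall_notMem]
      rintro z ⟨⟨i, hi, hz⟩, hzV⟩
      rw [hVdef] at hzV
      obtain ⟨q, hqP, hgq⟩ := Finset.mem_image.mp (Finset.mem_coe.mp hzV)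
      have h0 : (0 : ℤ) ≤ z := by
        rw [← hgq]
        simp only [hgdef]
        exact Int.ofNat_nonneg _
      interval_cases i
      simp at hz
      omega
end

section
/- Let D be an infinite set of positive integers. Let P be a finite set of points in ℝ² with pairwise distinct x-coordinates and let 𝓡 be a finite family of axis-parallel rectangles whose y-projections form a nested family. Then there exist a finite set V of integers, a bijection g : P → V, and for each R ∈ 𝓡 a finite arithmetic progression A_R whose difference belongs to D, such that for every R ∈ 𝓡 the image g(P ∩ R) equals A_R ∩ V. -/
noncomputable def s5pick (D : Set ℕ) (hD : D.Infinite) (q : ℕ) : ℕ :=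
  (hD.exists_gt (2 * q)).choose

lemma s5pick_mem (D : Set ℕ) (hD : D.Infinite) (q : ℕ) : s5pick D hD q ∈ D :=
  (hD.exists_gt (2 * q)).choose_spec.1

lemma s5pick_gt (D : Set ℕ) (hD : D.Infinite) (q : ℕ) : 2 * q < s5pick D hD q :=
  (hD.exists_gt (2 * q)).choose_spec.2

noncomputable def s5Q (D : Set ℕ) (hD : D.Infinite) : ℕ → ℕ
  | 0 => 1
  | j + 1 => s5Q D hD j * s5pick D hD (s5Q D hD j)

lemma s5Q_pos (D : Set ℕ) (hD : D.Infinite) : ∀ j, 0 < s5Q D hD j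
  | 0 => Nat.one_pos
  | j + 1 => Nat.mul_pos (s5Q_pos D hD j)
      (lt_of_le_of_lt (Nat.zero_le _) (s5pick_gt D hD (s5Q D hD j)))

lemma s5Q_dvd (D : Set ℕ) (hD : D.Infinite) {i j : ℕ} (h : i ≤ j) :
    s5Q D hD i ∣ s5Q D hD j := by
  induction j with
  | zero => simp [Nat.le_zero.mp h]
  | succ j ih =>
    rcases Nat.lt_or_ge i (j+1) with h' | h'
    · exact (ih (Nat.lt_succ_iff.mp h')).trans ⟨s5pick D hD (s5Q D hD j), rfl⟩
    · have : i = j + 1 := le_antisymm h h'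
      simp [this]

lemma s5T_lt (D : Set ℕ) (hD : D.Infinite) : ∀ j, (∑ i ∈ Finset.range j, s5Q D hD i) < s5Q D hD j
  | 0 => by simp [s5Q]
  | j + 1 => by
    have h1 := s5T_lt D hD j
    have h2 : 2 * s5Q D hD j < s5pick D hD (s5Q D hD j) := s5pick_gt D hD _
    have h3 : 0 < s5Q D hD j := s5Q_pos D hD j
    rw [Finset.sum_range_succ]
    show _ < s5Q D hD j * s5pick D hD (s5Q D hD j)
    calc (∑ i ∈ Finset.range j, s5Q D hD i) + s5Q D hD j
        < s5Q D hD j + s5Q D hD j := by omega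
      _ = s5Q D hD j * 2 := by ring
      _ ≤ s5Q D hD j * s5pick D hD (s5Q D hD j) := Nat.mul_le_mul_left _ (by omega)

lemma s5T_lt_d (D : Set ℕ) (hD : D.Infinite) (j : ℕ) :
    (∑ i ∈ Finset.range (j+1), s5Q D hD i) < s5pick D hD (s5Q D hD j) := by
  have h1 := s5T_lt D hD j
  have h2 := s5pick_gt D hD (s5Q D hD j)
  rw [Finset.sum_range_succ]
  omega


/-- Let `D` be an infinite set of positive integers.  Any finite planar point set `P`
with pairwise distinct `x`-coordinates, together with a finite family `𝓡` of
axis-parallel rectangles whose `y`-projections form a nested family, can be realized by a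
finite set `V ⊆ ℤ` and finite arithmetic progressions whose differences belong to `D`:
there are a bijection `g : P → V` and for each `r ∈ 𝓡` a progression (with base
`(A r).1`, difference `(A r).2.1 ∈ D` and length `(A r).2.2`) such that
`g '' (P ∩ r) = A_r ∩ V`. -/
theorem statement5 (D : Set ℕ) (hD : D.Infinite) (hDpos : ∀ d ∈ D, 0 < d)
    (P : Finset (ℝ × ℝ))
    (hP : ∀ p ∈ P, ∀ q ∈ P, p.1 = q.1 → p = q)
    (𝓡 : Finset (ℝ × ℝ × ℝ × ℝ))
    (hord : ∀ r ∈ 𝓡, r.1 ≤ r.2.1 ∧ r.2.2.1 ≤ r.2.2.2)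
    (hnest : ∀ r ∈ 𝓡, ∀ r' ∈ 𝓡,
      yProj r ⊆ yProj r' ∨ yProj r' ⊆ yProj r ∨ yProj r ∩ yProj r' = ∅) :
    ∃ (V : Finset ℤ) (g : ℝ × ℝ → ℤ) (A : ℝ × ℝ × ℝ × ℝ → ℤ × ℕ × ℕ),
      Set.BijOn g (P : Set (ℝ × ℝ)) (V : Set ℤ) ∧
      (∀ r ∈ 𝓡, (A r).2.1 ∈ D ∧ 1 ≤ (A r).2.2) ∧
      ∀ r ∈ 𝓡, g '' ((P : Set (ℝ × ℝ)) ∩ rectSet r) =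
        AP (A r).1 ((A r).2.1 : ℤ) (A r).2.2 ∩ (V : Set ℤ) := by
  classical
  -- the sorted list of rectangles (by weakly decreasing interval length)
  set lenR : ℝ × ℝ × ℝ × ℝ → ℝ := fun r => r.2.2.2 - r.2.2.1 with hlenR
  set L : List (ℝ × ℝ × ℝ × ℝ) :=
    𝓡.toList.mergeSort (fun a b => decide (lenR b ≤ lenR a)) with hLdef
  have hperm : L.Perm 𝓡.toList := List.mergeSort_perm _ _
  have hmemL : ∀ r, r ∈ L ↔ r ∈ 𝓡 := fun r => hperm.mem_iff.trans (Finset.mem_toList)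
  have hpw : L.Pairwise (fun a b => lenR b ≤ lenR a) := by
    have h := List.pairwise_mergeSort
      (le := fun a b : ℝ × ℝ × ℝ × ℝ => decide (lenR b ≤ lenR a))
      (by intro a b c h1 h2
          simp only [decide_eq_true_eq] at *
          exact le_trans h2 h1)
      (by intro a b
          simp only [Bool.or_eq_true, decide_eq_true_eq]
          exact le_total (lenR b) (lenR a))
      𝓡.toList
    exact h.imp (by simp)
  set k : ℕ := L.length with hk
  set Q : ℕ → ℕ := s5Q D hD with hQ
  set dd : ℕ → ℕ := fun j => s5pick D hD (Q j) with hdd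
  have hQsucc : ∀ j, Q (j+1) = Q j * dd j := fun j => rfl
  have hQpos : ∀ j, 0 < Q j := s5Q_pos D hD
  have hddgt : ∀ j, 2 * Q j < dd j := fun j => s5pick_gt D hD _
  have hddpos : ∀ j, 0 < dd j := fun j => lt_of_le_of_lt (Nat.zero_le _) (hddgt j)
  have hT : ∀ j, (∑ i ∈ Finset.range j, Q i) < Q j := s5T_lt D hD
  have hTd : ∀ j, (∑ i ∈ Finset.range (j+1), Q i) < dd j := s5T_lt_d D hD
  set rk : ℝ × ℝ → ℕ := fun p => (P.filter fun q => q.1 < p.1).card with hrk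
  set II : ℕ → Set ℝ := fun j => yProj (L.getD j default) with hII
  set E : ℝ × ℝ → ℕ := fun p => ∑ j ∈ Finset.range k, if p.2 ∈ II j then Q j else 0 with hE
  set g : ℝ × ℝ → ℤ := fun p => ((rk p * Q k + E p : ℕ) : ℤ) with hg
  set c : ℝ × ℝ → ℕ → ℕ :=
    fun p j => ∑ j' ∈ Finset.range (j+1), if p.2 ∈ II j' then Q j' else 0 with hc
  -- basic bounds
  have hE_lt : ∀ p, E p < Q k := by
    intro p
    calc E p ≤ ∑ j ∈ Finset.range k, Q j :=
          Finset.sum_le_sum (fun j _ => by split <;> simp)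
      _ < Q k := hT k
  have hgnn : ∀ p, 0 ≤ g p := fun p => Int.ofNat_nonneg _
  -- monotonicity
  have hmono : ∀ p ∈ P, ∀ q ∈ P, q.1 < p.1 → g q < g p := by
    intro p hp q hq hlt
    have hrklt : rk q < rk p := by
      apply Finset.card_lt_card
      constructor
      · intro z hz
        rw [Finset.mem_filter] at *
        exact ⟨hz.1, lt_trans hz.2 hlt⟩
      · intro hsub
        have : q ∈ P.filter fun z => z.1 < p.1 := Finset.mem_filter.mpr ⟨hq, hlt⟩
        have := hsub this
        rw [Finset.mem_filter] at this
        exact lt_irrefl _ this.2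
    have : rk q * Q k + E q < rk p * Q k + E p := by
      have h1 : rk q * Q k + E q < (rk q + 1) * Q k := by
        have := hE_lt q; nlinarith [hQpos k]
      have h2 : (rk q + 1) * Q k ≤ rk p * Q k := Nat.mul_le_mul_right _ (by omega)
      omega
    simpa [hg] using Int.ofNat_lt.mpr this
  have hmono' : ∀ p ∈ P, ∀ q ∈ P, g p ≤ g q → p.1 ≤ q.1 := by
    intro p hp q hq hle
    by_contra hx
    exact absurd (hmono p hp q hq (lt_of_not_ge hx)) (not_lt.mpr hle)
  have hinj : Set.InjOn g (P : Set (ℝ × ℝ)) := by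
    intro p hp q hq heq
    by_contra hne
    have hxne : p.1 ≠ q.1 := fun h => hne (hP p hp q hq h)
    rcases lt_or_gt_of_ne hxne with h | h
    · exact absurd heq (ne_of_lt (hmono q hq p hp h))
    · exact absurd heq (ne_of_gt (hmono p hp q hq h))
  -- residue structure
  have hc_lt_d : ∀ p j, c p j < dd j := by
    intro p j
    calc c p j ≤ ∑ j' ∈ Finset.range (j+1), Q j' :=
          Finset.sum_le_sum (fun j' _ => by split <;> simp)
      _ < dd j := hTd j
  have hgmodc : ∀ p j, j < k → (dd j : ℤ) ∣ g p - c p j := by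
    intro p j hj
    have hsplit : E p = c p j + ∑ j' ∈ Finset.Ico (j+1) k, (if p.2 ∈ II j' then Q j' else 0) := by
      rw [hc]
      exact (Finset.sum_range_add_sum_Ico _ (by omega)).symm
    have hddQ : ∀ j' : ℕ, j < j' → dd j ∣ Q j' := by
      intro j' hj'
      exact (Dvd.intro_left (Q j) (hQsucc j).symm).trans (s5Q_dvd D hD hj')
    have hdvd1 : (dd j : ℤ) ∣ (rk p * Q k : ℕ) := by
      exact Int.natCast_dvd_natCast.mpr (Dvd.dvd.mul_left (hddQ k hj) _)
    have hdvd2 : (dd j : ℤ) ∣ (∑ j' ∈ Finset.Ico (j+1) k, (if p.2 ∈ II j' then Q j' else 0) : ℕ) := by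
      apply Int.natCast_dvd_natCast.mpr
      apply Finset.dvd_sum
      intro j' hj'
      have hmem := Finset.mem_Ico.mp hj'
      have hdQ : dd j ∣ Q j' := hddQ j' hmem.1
      split
      · exact hdQ
      · exact dvd_zero _
    have : g p = (c p j : ℤ) + ((rk p * Q k : ℕ) : ℤ)
        + ((∑ j' ∈ Finset.Ico (j+1) k, (if p.2 ∈ II j' then Q j' else 0) : ℕ) : ℤ) := by
      rw [hg]
      push_cast [hsplit]
      ring
    rw [this]
    have h0 := dvd_add hdvd1 hdvd2
    have : (c p j : ℤ) + ((rk p * Q k : ℕ) : ℤ)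
        + ((∑ j' ∈ Finset.Ico (j+1) k, (if p.2 ∈ II j' then Q j' else 0) : ℕ) : ℤ)
        - c p j = ((rk p * Q k : ℕ) : ℤ)
        + ((∑ j' ∈ Finset.Ico (j+1) k, (if p.2 ∈ II j' then Q j' else 0) : ℕ) : ℤ) := by ring
    rw [this]
    exact h0
  -- g mod dd j equals c p j
  have hgmod : ∀ p j, j < k → g p % (dd j : ℤ) = c p j := by
    intro p j hj
    have h1 := hgmodc p j hj
    have h2 : (c p j : ℤ) % (dd j : ℤ) = c p j :=
      Int.emod_eq_of_lt (Int.ofNat_nonneg _)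
        (Int.ofNat_lt.mpr (hc_lt_d p j))
    have hmq : g p ≡ (c p j : ℤ) [ZMOD (dd j : ℤ)] :=
      Int.ModEq.symm (Int.modEq_iff_dvd.mpr (by simpa using h1))
    rw [Int.ModEq] at hmq
    rw [hmq, h2]
  -- laminar structure: for j' ≤ j < k, II j ⊆ II j' or disjoint
  have hLmem : ∀ j, j < k → L.getD j default ∈ 𝓡 := by
    intro j hj
    rw [← hmemL]
    rw [List.getD_eq_getElem L default hj]
    exact List.getElem_mem _
  have hlam : ∀ j' j, j' ≤ j → j < k → II j ⊆ II j' ∨ II j ∩ II j' = ∅ := by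
    intro j' j hle hj
    rcases eq_or_lt_of_le hle with rfl | hlt
    · exact Or.inl (subset_refl _)
    set a := L.getD j' default with ha
    set b := L.getD j default with hb
    have haR : a ∈ 𝓡 := hLmem j' (lt_trans hlt hj)
    have hbR : b ∈ 𝓡 := hLmem j hj
    have hlen : lenR b ≤ lenR a := by
      have := List.pairwise_iff_getElem.mp hpw j' j (lt_trans hlt hj) hj hlt
      rw [ha, hb, List.getD_eq_getElem L default (lt_trans hlt hj), List.getD_eq_getElem L default hj]
      exact this
    rcases hnest b hbR a haR with h | h | h
    · exact Or.inl h
    · -- yProj a ⊆ yProj b with lenR b ≤ lenR a forces equality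
      left
      have hao := (hord a haR).2
      have hbo := (hord b hbR).2
      have hsub := (Set.Icc_subset_Icc_iff hao).mp h
      simp only [hlenR] at hlen
      have h1 : b.2.2.1 = a.2.2.1 := by linarith [hsub.1, hsub.2]
      have h2 : b.2.2.2 = a.2.2.2 := by linarith [hsub.1, hsub.2]
      show Set.Icc b.2.2.1 b.2.2.2 ⊆ Set.Icc a.2.2.1 a.2.2.2
      rw [h1, h2]
    · exact Or.inr h
  have hcconst : ∀ j, j < k → ∀ p q : ℝ × ℝ, p.2 ∈ II j → q.2 ∈ II j → c p j = c q j := by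
    intro j hj p q hp hq
    apply Finset.sum_congr rfl
    intro j' hj'
    have hle : j' ≤ j := by
      have := Finset.mem_range.mp hj'; omega
    rcases hlam j' j hle hj with hsub | hdis
    · rw [if_pos (hsub hp), if_pos (hsub hq)]
    · have h1 : p.2 ∉ II j' := fun hmem => Set.eq_empty_iff_forall_notMem.mp hdis p.2 ⟨hp, hmem⟩
      have h2 : q.2 ∉ II j' := fun hmem => Set.eq_empty_iff_forall_notMem.mp hdis q.2 ⟨hq, hmem⟩
      rw [if_neg h1, if_neg h2]
  have hc_ge : ∀ j p, p.2 ∈ II j → Q j ≤ c p j := by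
    intro j p hp
    have : (if p.2 ∈ II j then Q j else 0) = Q j := if_pos hp
    calc Q j = if p.2 ∈ II j then Q j else 0 := this.symm
      _ ≤ c p j := Finset.single_le_sum (f := fun j' => if p.2 ∈ II j' then Q j' else 0)
          (fun i _ => Nat.zero_le _) (Finset.self_mem_range_succ j)
  have hc_lt : ∀ j p, p.2 ∉ II j → c p j < Q j := by
    intro j p hp
    have : c p j = (∑ j' ∈ Finset.range j, if p.2 ∈ II j' then Q j' else 0) + 0 := by
      simp only [hc]
      rw [Finset.sum_range_succ, if_neg hp]
    rw [this]
    calc (∑ j' ∈ Finset.range j, if p.2 ∈ II j' then Q j' else 0) + 0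
        ≤ ∑ j' ∈ Finset.range j, Q j' := by
          simpa using Finset.sum_le_sum (f := fun j' => if p.2 ∈ II j' then Q j' else 0)
            (g := Q) (s := Finset.range j) (fun j' _ => by split <;> simp)
      _ < Q j := hT j
  -- index of a rectangle in the list
  set idx : (ℝ × ℝ × ℝ × ℝ) → ℕ := fun r =>
    if h : ∃ j, j < k ∧ L.getD j default = r then Nat.find h else 0 with hidx
  have hidx_spec : ∀ r ∈ 𝓡, idx r < k ∧ L.getD (idx r) default = r := by
    intro r hr
    obtain ⟨j0, hj0, hrj0⟩ := List.mem_iff_getElem.mp ((hmemL r).mpr hr)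
    have hex : ∃ j, j < k ∧ L.getD j default = r :=
      ⟨j0, hj0, by rw [List.getD_eq_getElem L default hj0]; exact hrj0⟩
    simp only [hidx, dif_pos hex]
    exact Nat.find_spec hex
  -- the progressions
  set A : (ℝ × ℝ × ℝ × ℝ) → ℤ × ℕ × ℕ := fun r =>
    if h : ((P.filter fun p => p ∈ rectSet r).image g).Nonempty then
      ((((P.filter fun p => p ∈ rectSet r).image g)).min' h, dd (idx r),
        (((((P.filter fun p => p ∈ rectSet r).image g)).max' h
          - ((((P.filter fun p => p ∈ rectSet r).image g)).min' h)) / (dd (idx r) : ℤ)).toNat + 1)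
    else (-1, dd (idx r), 1) with hA
  refine ⟨P.image g, g, A, ?_, ?_, ?_⟩
  · -- BijOn
    refine ⟨?_, hinj, ?_⟩
    · intro p hp
      simp only [Finset.coe_image]
      exact Set.mem_image_of_mem g hp
    · intro v hv
      simp only [Finset.coe_image] at hv
      exact hv
  · -- membership of the difference in D, and 1 ≤ length
    intro r hr
    constructor
    · simp only [hA]
      split <;> exact s5pick_mem D hD _
    · simp only [hA]
      split <;> simp
  · -- the main equality
    intro r hr
    set j : ℕ := idx r with hj
    have hjk : j < k := (hidx_spec r hr).1
    have hrj : L.getD j default = r := (hidx_spec r hr).2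
    have hIIr : II j = yProj r := by rw [hII]; simp only; rw [hrj]
    set S : Finset (ℝ × ℝ) := P.filter fun p => p ∈ rectSet r with hS
    have hPS : (P : Set (ℝ × ℝ)) ∩ rectSet r = (S : Set (ℝ × ℝ)) := by
      rw [hS, Finset.coe_filter]
      ext z
      simp [Set.mem_inter_iff]
    set gI : Finset ℤ := S.image g with hgI
    have himg : g '' ((P : Set (ℝ × ℝ)) ∩ rectSet r) = (gI : Set ℤ) := by
      rw [hPS, hgI, Finset.coe_image]
    by_cases h : gI.Nonempty
    · -- the nonempty case
      have hAr : A r = (gI.min' h, dd j,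
          ((gI.max' h - gI.min' h) / (dd j : ℤ)).toNat + 1) := by
        simp only [hA]
        exact dif_pos h
      set b : ℤ := gI.min' h with hb
      set M : ℤ := gI.max' h with hM
      set t : ℤ := (M - b) / (dd j : ℤ) with htdef
      obtain ⟨p0, hp0S, hgp0⟩ := Finset.mem_image.mp (gI.min'_mem h)
      obtain ⟨pM, hpMS, hgpM⟩ := Finset.mem_image.mp (gI.max'_mem h)
      rw [← hb] at hgp0
      rw [← hM] at hgpM
      have hSP : ∀ p ∈ S, p ∈ P := fun p hp => (Finset.mem_filter.mp hp).1
      have hSrect : ∀ p ∈ S, p ∈ rectSet r := fun p hp => (Finset.mem_filter.mp hp).2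
      have hyS : ∀ p ∈ S, p.2 ∈ II j := by
        intro p hp
        rw [hIIr]
        exact (Set.mem_prod.mp (hSrect p hp)).2
      set c0 : ℕ := c p0 j with hc0
      have hmodS : ∀ p ∈ S, g p % (dd j : ℤ) = c0 := by
        intro p hp
        rw [hgmod p j hjk, hcconst j hjk p p0 (hyS p hp) (hyS p0 hp0S)]
      have hdjpos : (0:ℤ) < (dd j : ℤ) := Int.ofNat_lt.mpr (hddpos j)
      have hbM : b ≤ M := Finset.min'_le gI M (Finset.max'_mem gI h)
      have hdvdMb : (dd j : ℤ) ∣ M - b := by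
        have h1 : b % (dd j : ℤ) = M % (dd j : ℤ) := by
          rw [← hgp0, ← hgpM, hmodS p0 hp0S, hmodS pM hpMS]
        exact Int.ModEq.dvd h1
      have htmul : t * (dd j : ℤ) = M - b := Int.ediv_mul_cancel hdvdMb
      have ht0 : 0 ≤ t := Int.ediv_nonneg (by omega) (le_of_lt hdjpos)
      rw [himg, hAr]
      show (gI : Set ℤ) = AP b (dd j : ℤ) (t.toNat + 1) ∩ ((P.image g : Finset ℤ) : Set ℤ)
      ext v
      constructor
      · intro hv
        have hv' : v ∈ gI := Finset.mem_coe.mp hv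
        obtain ⟨p, hpS, hgpv⟩ := Finset.mem_image.mp hv'
        have hvb : b ≤ v := Finset.min'_le gI v hv'
        have hvM : v ≤ M := Finset.le_max' gI v hv'
        have hdvdv : (dd j : ℤ) ∣ v - b := by
          have h1 : b % (dd j : ℤ) = v % (dd j : ℤ) := by
            rw [← hgp0, ← hgpv, hmodS p0 hp0S, hmodS p hpS]
          exact Int.ModEq.dvd h1
        have hq0 : 0 ≤ (v - b) / (dd j : ℤ) := Int.ediv_nonneg (by omega) (le_of_lt hdjpos)
        have hqt : (v - b) / (dd j : ℤ) ≤ t := Int.ediv_le_ediv hdjpos (by omega)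
        constructor
        · refine ⟨((v - b) / (dd j : ℤ)).toNat, by omega, ?_⟩
          rw [Int.toNat_of_nonneg hq0]
          have := Int.ediv_mul_cancel hdvdv
          linarith
        · exact Finset.mem_coe.mpr (Finset.mem_image.mpr ⟨p, hSP p hpS, hgpv⟩)
      · rintro ⟨⟨i, him, hvi⟩, hvV⟩
        obtain ⟨q, hqP, hgq⟩ := Finset.mem_image.mp (Finset.mem_coe.mp hvV)
        have hvmod : v % (dd j : ℤ) = b % (dd j : ℤ) := by
          rw [hvi]
          simp [Int.add_mul_emod_self_right]
        have hvmod' : v % (dd j : ℤ) = c0 := by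
          rw [hvmod, ← hgp0, hmodS p0 hp0S]
        have hiT : (i : ℤ) ≤ t := by omega
        have hvM : v ≤ M := by
          have h1 : (i : ℤ) * (dd j : ℤ) ≤ t * (dd j : ℤ) :=
            mul_le_mul_of_nonneg_right hiT (le_of_lt hdjpos)
          rw [hvi]
          linarith
        have hvb : b ≤ v := by
          have h1 : (0:ℤ) ≤ (i : ℤ) * (dd j : ℤ) := by positivity
          rw [hvi]
          linarith
        have hy : q.2 ∈ II j := by
          by_contra hny
          have h1 : g q % (dd j : ℤ) = c q j := hgmod q j hjk
          have h2 : c q j < Q j := hc_lt j q hny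
          have h3 : Q j ≤ c0 := hc_ge j p0 (hyS p0 hp0S)
          rw [hgq, hvmod'] at h1
          have := Int.ofNat_inj.mp h1
          omega
        have hx1 : p0.1 ≤ q.1 := hmono' p0 (hSP p0 hp0S) q hqP (by rw [hgp0, hgq]; exact hvb)
        have hx2 : q.1 ≤ pM.1 := hmono' q hqP pM (hSP pM hpMS) (by rw [hgpM, hgq]; exact hvM)
        have hp0x := (Set.mem_prod.mp (hSrect p0 hp0S)).1
        have hpMx := (Set.mem_prod.mp (hSrect pM hpMS)).1
        have hqrect : q ∈ rectSet r := by
          refine Set.mem_prod.mpr ⟨?_, ?_⟩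
          · exact Set.mem_Icc.mpr ⟨le_trans (Set.mem_Icc.mp hp0x).1 hx1,
              le_trans hx2 (Set.mem_Icc.mp hpMx).2⟩
          · have : q.2 ∈ yProj r := hIIr ▸ hy
            exact this
        exact Finset.mem_coe.mpr (Finset.mem_image.mpr
          ⟨q, Finset.mem_filter.mpr ⟨hqP, hqrect⟩, hgq⟩)
    · -- empty case
      have hAr : A r = (-1, dd j, 1) := by rw [hA]; exact dif_neg h
      rw [himg, hAr]
      have hgIe : gI = ∅ := Finset.not_nonempty_iff_eq_empty.mp h
      rw [hgIe]
      ext v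
      simp only [Finset.coe_empty, Set.mem_empty_iff_false, Set.mem_inter_iff, false_iff]
      rintro ⟨⟨i, hi, hv⟩, hvV⟩
      interval_cases i
      · simp at hv
        subst hv
        rw [Finset.mem_coe, Finset.mem_image] at hvV
        obtain ⟨p, hp, hgp⟩ := hvV
        have := hgnn p
        omega
end

section
/- Let a : ℕ → ℝ be the van der Corput sequence. Then for every t ∈ ℕ, every b ∈ ℕ with b < 2^t, and every n ∈ ℕ: n ≡ b (mod 2^t) if and only if a_b ≤ a_n < a_b + 2^{−t}. -/
/-- The van der Corput sequence: `vdc n = ∑ dᵢ 2^{-i-1}` where `n = ∑ dᵢ 2^i` is the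
binary expansion of `n` (note every binary digit of `n` with index `≥ n` vanishes). -/
noncomputable def vdc (n : ℕ) : ℝ :=
  ∑ i ∈ Finset.range n, ((n / 2 ^ i) % 2 : ℕ) * (2 : ℝ) ^ (-(i : ℤ) - 1)

lemma vdc_eq_sum (n m : ℕ) (h : n ≤ m) :
    vdc n = ∑ i ∈ Finset.range m, ((n / 2 ^ i) % 2 : ℕ) * (2 : ℝ) ^ (-(i : ℤ) - 1) := by
  unfold vdc
  refine Finset.sum_subset (Finset.range_subset_range.2 h) ?_
  intro i hi hni
  simp only [Finset.mem_range, not_lt] at hni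
  have : n / 2 ^ i = 0 := Nat.div_eq_of_lt (lt_of_lt_of_le (Nat.lt_two_pow_self (n := n)) (Nat.pow_le_pow_right (by norm_num) hni))
  simp [this]

lemma vdc_zero : vdc 0 = 0 := by simp [vdc]

lemma vdc_rec (n : ℕ) : vdc n = (n % 2 : ℕ) / 2 + vdc (n / 2) / 2 := by
  rw [vdc_eq_sum n (n+1) (Nat.le_succ n), Finset.sum_range_succ',
    vdc_eq_sum (n/2) n (Nat.div_le_self n 2)]
  have key : ∀ i : ℕ, ((n / 2 ^ (i+1)) % 2 : ℕ) * (2 : ℝ) ^ (-((i:ℕ)+1 : ℤ) - 1)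
      = (((n/2) / 2 ^ i) % 2 : ℕ) * (2 : ℝ) ^ (-(i : ℤ) - 1) / 2 := by
    intro i
    have h1 : n / 2 ^ (i+1) = (n/2) / 2 ^ i := by
      rw [pow_succ']
      rw [Nat.div_div_eq_div_mul]
    rw [h1]
    have h2 : (2 : ℝ) ^ (-((i:ℕ)+1 : ℤ) - 1) = (2 : ℝ) ^ (-(i : ℤ) - 1) / 2 := by
      rw [div_eq_mul_inv, ← zpow_neg_one, ← zpow_add₀ (by norm_num : (2:ℝ) ≠ 0)]
      ring_nf
    rw [h2]; ring
  simp only [Nat.cast_add, Nat.cast_one] at key ⊢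
  rw [Finset.sum_congr rfl (fun i _ => key i), ← Finset.sum_div]
  simp [pow_zero, Nat.div_one]
  ring

lemma vdc_nonneg (n : ℕ) : 0 ≤ vdc n := by
  apply Finset.sum_nonneg
  intro i _
  positivity

lemma vdc_le {t b : ℕ} (hb : b < 2 ^ t) : vdc b ≤ 1 - (2 : ℝ) ^ (-(t : ℤ)) := by
  induction t generalizing b with
  | zero =>
    interval_cases b
    simp [vdc_zero]
  | succ t ih =>
    have hb2 : b / 2 < 2 ^ t := Nat.div_lt_of_lt_mul (by rw [← pow_succ']; exact hb)
    have h1 : ((b % 2 : ℕ) : ℝ) ≤ 1 := by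
      have := Nat.mod_lt b (show 0 < 2 by norm_num)
      exact_mod_cast Nat.lt_succ_iff.mp this
    have h2 := ih hb2
    rw [vdc_rec b]
    have hz : (2 : ℝ) ^ (-((t:ℕ)+1 : ℤ)) = (2 : ℝ) ^ (-(t : ℤ)) / 2 := by
      rw [div_eq_mul_inv, ← zpow_neg_one, ← zpow_add₀ (by norm_num : (2:ℝ) ≠ 0)]
      ring_nf
    push_cast
    rw [hz]
    linarith

lemma vdc_lt_one (n : ℕ) : vdc n < 1 := by
  have := vdc_le (Nat.lt_two_pow_self (n := n))
  have : (0:ℝ) < (2 : ℝ) ^ (-(n : ℤ)) := by positivity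
  linarith [vdc_le (Nat.lt_two_pow_self (n := n))]

lemma vdc_split (t n : ℕ) :
    vdc n = vdc (n % 2 ^ t) + (2 : ℝ) ^ (-(t : ℤ)) * vdc (n / 2 ^ t) := by
  induction t generalizing n with
  | zero => simp [Nat.mod_one, vdc_zero]
  | succ t ih =>
    have h1 : n / 2 ^ (t+1) = (n / 2) / 2 ^ t := by
      rw [pow_succ', Nat.div_div_eq_div_mul]
    have h2 : (n % 2 ^ (t+1)) % 2 = n % 2 := by
      rw [Nat.mod_mod_of_dvd]
      exact dvd_pow_self 2 (Nat.succ_ne_zero t)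
    have h3 : (n % 2 ^ (t+1)) / 2 = (n / 2) % 2 ^ t := by
      rw [pow_succ', Nat.mod_mul_right_div_self]
    have hz : (2 : ℝ) ^ (-((t:ℕ)+1 : ℤ)) = (2 : ℝ) ^ (-(t : ℤ)) / 2 := by
      rw [div_eq_mul_inv, ← zpow_neg_one, ← zpow_add₀ (by norm_num : (2:ℝ) ≠ 0)]
      ring_nf
    rw [vdc_rec n, ih (n/2), vdc_rec (n % 2 ^ (t+1)), h1, h2, h3]
    push_cast
    rw [hz]
    ring

lemma vdc_sep {t b c : ℕ} (hb : b < 2 ^ t) (hc : c < 2 ^ t) (hne : b ≠ c) :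
    (2 : ℝ) ^ (-(t : ℤ)) ≤ |vdc b - vdc c| := by
  induction t generalizing b c with
  | zero => interval_cases b <;> interval_cases c <;> simp_all
  | succ t ih =>
    have hb2 : b / 2 < 2 ^ t := Nat.div_lt_of_lt_mul (by rw [← pow_succ']; exact hb)
    have hc2 : c / 2 < 2 ^ t := Nat.div_lt_of_lt_mul (by rw [← pow_succ']; exact hc)
    have hz : (2 : ℝ) ^ (-((t:ℕ)+1 : ℤ)) = (2 : ℝ) ^ (-(t : ℤ)) / 2 := by
      rw [div_eq_mul_inv, ← zpow_neg_one, ← zpow_add₀ (by norm_num : (2:ℝ) ≠ 0)]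
      ring_nf
    push_cast
    rw [hz, vdc_rec b, vdc_rec c]
    by_cases hpar : b % 2 = c % 2
    · have hdiv : b / 2 ≠ c / 2 := by
        intro h
        exact hne (by omega)
      have := ih hb2 hc2 hdiv
      rw [hpar]
      have heq : ((c % 2 : ℕ) : ℝ) / 2 + vdc (b / 2) / 2 - (((c % 2 : ℕ) : ℝ) / 2 + vdc (c / 2) / 2)
          = (vdc (b/2) - vdc (c/2)) / 2 := by ring
      rw [heq, abs_div]
      rw [abs_of_nonneg (by norm_num : (0:ℝ) ≤ 2)]
      linarith
    · -- parities differ: WLOG treat both cases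
      have key : ∀ x y : ℕ, x < 2 ^ t → y < 2 ^ t →
          (2 : ℝ) ^ (-(t : ℤ)) / 2 ≤ (1 / 2 + vdc x / 2) - (0 / 2 + vdc y / 2) := by
        intro x y hx hy
        have h1 := vdc_le hy
        have h2 := vdc_nonneg x
        linarith
      have hb1 : (b % 2 = 0 ∧ c % 2 = 1) ∨ (b % 2 = 1 ∧ c % 2 = 0) := by omega
      rcases hb1 with ⟨h1, h2⟩ | ⟨h1, h2⟩
      · rw [h1, h2, abs_sub_comm]
        have := key _ _ hc2 hb2
        have hzpos : (0:ℝ) < (2 : ℝ) ^ (-(t : ℤ)) := by positivity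
        rw [abs_of_nonneg (by push_cast; linarith)]
        push_cast
        push_cast at this
        linarith
      · rw [h1, h2]
        have := key _ _ hb2 hc2
        have hzpos : (0:ℝ) < (2 : ℝ) ^ (-(t : ℤ)) := by positivity
        rw [abs_of_nonneg (by push_cast; linarith)]
        push_cast
        push_cast at this
        linarith

/-- For every `t`, every `b < 2^t` and every `n`: `n ≡ b (mod 2^t)` if and only if
`vdc b ≤ vdc n < vdc b + 2^{-t}`. -/
theorem statement12 (t b n : ℕ) (hb : b < 2 ^ t) :
    n % 2 ^ t = b ↔ vdc b ≤ vdc n ∧ vdc n < vdc b + (2 : ℝ) ^ (-(t : ℤ)) := by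
  have hsplit := vdc_split t n
  have hq0 := vdc_nonneg (n / 2 ^ t)
  have hq1 := vdc_lt_one (n / 2 ^ t)
  have hzpos : (0:ℝ) < (2 : ℝ) ^ (-(t : ℤ)) := by positivity
  constructor
  · intro h
    rw [h] at hsplit
    constructor
    · nlinarith
    · nlinarith
  · rintro ⟨h1, h2⟩
    by_contra hne
    have hc : n % 2 ^ t < 2 ^ t := Nat.mod_lt n (Nat.pow_pos (by norm_num))
    have hsep := vdc_sep hb hc (fun h => hne h.symm)
    rcases abs_cases (vdc b - vdc (n % 2 ^ t)) with ⟨heq, _⟩ | ⟨heq, _⟩ <;>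
      rw [heq] at hsep <;> nlinarith
end

section
/- Let a : ℕ → ℝ be the van der Corput sequence. Then the family of half-open intervals {[a_b, a_b + 2^{−t}) : t ∈ ℕ, b ∈ ℕ, b < 2^t} is nested: for any t, t' ∈ ℕ, b < 2^t, and b' < 2^{t'}, the intervals [a_b, a_b + 2^{−t}) and [a_{b'}, a_{b'} + 2^{−t'}) are either disjoint or one is contained in the other. -/
lemma vdc_dyadic (t b : ℕ) (hb : b < 2 ^ t) :
    ∃ m : ℕ, vdc b = m / 2 ^ t := by
  refine ⟨∑ i ∈ Finset.range t, ((b / 2 ^ i) % 2) * 2 ^ (t - 1 - i), ?_⟩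
  have h1 : vdc b = ∑ i ∈ Finset.range t, ((b / 2 ^ i) % 2 : ℕ) * (2 : ℝ) ^ (-(i : ℤ) - 1) := by
    unfold vdc
    have e1 : ∑ i ∈ Finset.range b, ((b / 2 ^ i) % 2 : ℕ) * (2 : ℝ) ^ (-(i : ℤ) - 1)
        = ∑ i ∈ Finset.range (max b t), ((b / 2 ^ i) % 2 : ℕ) * (2 : ℝ) ^ (-(i : ℤ) - 1) := by
      apply Finset.sum_subset (Finset.range_subset_range.2 (le_max_left b t))
      intro i _ hi
      simp only [Finset.mem_range, not_lt] at hi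
      have : b / 2 ^ i = 0 :=
        Nat.div_eq_of_lt (lt_of_lt_of_le (Nat.lt_two_pow_self (n := b)) (Nat.pow_le_pow_right (by norm_num) hi))
      simp [this]
    have e2 : ∑ i ∈ Finset.range t, ((b / 2 ^ i) % 2 : ℕ) * (2 : ℝ) ^ (-(i : ℤ) - 1)
        = ∑ i ∈ Finset.range (max b t), ((b / 2 ^ i) % 2 : ℕ) * (2 : ℝ) ^ (-(i : ℤ) - 1) := by
      apply Finset.sum_subset (Finset.range_subset_range.2 (le_max_right b t))
      intro i _ hi
      simp only [Finset.mem_range, not_lt] at hi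
      have : b / 2 ^ i = 0 :=
        Nat.div_eq_of_lt (lt_of_lt_of_le hb (Nat.pow_le_pow_right (by norm_num) hi))
      simp [this]
    rw [e1, ← e2]
  rw [h1]
  push_cast
  rw [Finset.sum_div]
  apply Finset.sum_congr rfl
  intro i hi
  simp only [Finset.mem_range] at hi
  rw [mul_div_assoc]
  congr 1
  rw [eq_div_iff (by positivity : (2:ℝ)^t ≠ 0), ← zpow_natCast (2:ℝ) (t-1-i),
      ← zpow_natCast (2:ℝ) t, ← zpow_add₀ (two_ne_zero)]
  congr 1
  omega

lemma dyadic_nest (t k m m' : ℕ) :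
    Set.Ico ((m':ℝ)/2^(t+k)) ((m'+1)/2^(t+k)) ⊆ Set.Ico ((m:ℝ)/2^t) ((m+1)/2^t) ∨
    Set.Ico ((m:ℝ)/2^t) ((m+1)/2^t) ∩ Set.Ico ((m':ℝ)/2^(t+k)) ((m'+1)/2^(t+k)) = ∅ := by
  have hk : (0:ℝ) < 2^k := by positivity
  have ht : (0:ℝ) < 2^(t+k) := by positivity
  have key : ∀ a : ℝ, a/2^t = (a * 2^k)/2^(t+k) := by
    intro a
    rw [pow_add, ← mul_div_mul_right a (2^t) (ne_of_gt hk)]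
  by_cases h1 : m * 2^k ≤ m' ∧ m' < (m+1)*2^k
  · left
    rintro x ⟨hx1, hx2⟩
    constructor
    · rw [key]
      refine le_trans ((div_le_div_iff_of_pos_right ht).2 ?_) hx1
      have := h1.1
      push_cast
      exact_mod_cast this
    · rw [key ((m:ℝ)+1)]
      refine lt_of_lt_of_le hx2 ((div_le_div_iff_of_pos_right ht).2 ?_)
      have : m' + 1 ≤ (m+1)*2^k := h1.2
      push_cast
      exact_mod_cast this
  · right
    rw [not_and_or, not_le, not_lt] at h1
    ext x
    simp only [Set.mem_inter_iff, Set.mem_Ico, Set.mem_empty_iff_false, iff_false, not_and,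
      and_imp]
    rcases h1 with h1 | h1
    · intro hx1 _ _ hx4
      have hle : m' + 1 ≤ m * 2^k := h1
      have : ((m':ℝ)+1)/2^(t+k) ≤ (m:ℝ)/2^t := by
        rw [key (m:ℝ)]
        refine (div_le_div_iff_of_pos_right ht).2 ?_
        exact_mod_cast hle
      linarith
    · intro _ hx2 hx3 _
      have : ((m:ℝ)+1)/2^t ≤ (m':ℝ)/2^(t+k) := by
        rw [key ((m:ℝ)+1)]
        refine (div_le_div_iff_of_pos_right ht).2 ?_
        exact_mod_cast h1
      linarith

lemma interval_eq (t : ℕ) (m : ℕ) (x : ℝ) (hx : x = m / 2^t) :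
    Set.Ico x (x + (2:ℝ) ^ (-(t:ℤ))) = Set.Ico ((m:ℝ)/2^t) ((m+1)/2^t) := by
  subst hx
  congr 1
  rw [zpow_neg, zpow_natCast]
  field_simp

/-- The family of half-open intervals `[vdc b, vdc b + 2^{-t})` over `t ∈ ℕ`, `b < 2^t`
is nested: any two of them are disjoint or one contains the other. -/
theorem statement14 (t t' b b' : ℕ) (hb : b < 2 ^ t) (hb' : b' < 2 ^ t') :
    Set.Ico (vdc b) (vdc b + (2 : ℝ) ^ (-(t : ℤ))) ⊆
        Set.Ico (vdc b') (vdc b' + (2 : ℝ) ^ (-(t' : ℤ))) ∨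
    Set.Ico (vdc b') (vdc b' + (2 : ℝ) ^ (-(t' : ℤ))) ⊆
        Set.Ico (vdc b) (vdc b + (2 : ℝ) ^ (-(t : ℤ))) ∨
    Set.Ico (vdc b) (vdc b + (2 : ℝ) ^ (-(t : ℤ))) ∩
        Set.Ico (vdc b') (vdc b' + (2 : ℝ) ^ (-(t' : ℤ))) = ∅ := by
  obtain ⟨m, hm⟩ := vdc_dyadic t b hb
  obtain ⟨m', hm'⟩ := vdc_dyadic t' b' hb'
  rw [interval_eq t m _ hm, interval_eq t' m' _ hm']
  rcases le_total t t' with h | h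
  · obtain ⟨k, rfl⟩ := Nat.exists_eq_add_of_le h
    rcases dyadic_nest t k m m' with hc | hd
    · right; left; exact hc
    · right; right; exact hd
  · obtain ⟨k, rfl⟩ := Nat.exists_eq_add_of_le h
    rcases dyadic_nest t' k m' m with hc | hd
    · left; exact hc
    · right; right; rw [Set.inter_comm]; exact hd
end
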